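/- Let n ≥ 2 and k ≥ 1, and set D := 2·e·n·(ln n)/k. Then ∑_{d=⌈D⌉}^{n} (1 − d/(e·n))^k ≤ 1/n, provided D ≤ n. -/

import Mathlib

open Real Finset

theorem no_early_switch (n k : ℕ) (hn : 2 ≤ n) (hk : 1 ≤ k)
    (hD : 2 * Real.exp 1 * n * Real.log n / k ≤ n) :
    ∑ d ∈ Finset.Icc ⌈2 * Real.exp 1 * n * Real.log n / k⌉₊ n,
        (1 - (d : ℝ) / (Real.exp 1 * n)) ^ k ≤ 1 / n := by
  have hnpos : (0:ℝ) < n := by positivity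
  have hn1 : (1:ℝ) < n := by exact_mod_cast hn.trans_lt' one_lt_two |>.trans_le le_rfl
  have hkpos : (0:ℝ) < k := by exact_mod_cast hk
  have he2 : (2:ℝ) ≤ Real.exp 1 := by
    have := Real.add_one_le_exp 1; linarith
  have hepos : (0:ℝ) < Real.exp 1 := Real.exp_pos 1
  have hlogpos : 0 < Real.log n := Real.log_pos hn1
  set D := 2 * Real.exp 1 * n * Real.log n / k with hDdef
  have hDpos : 0 < D := by positivity
  have hterm : ∀ d ∈ Finset.Icc ⌈D⌉₊ n,
      (1 - (d:ℝ) / (Real.exp 1 * n)) ^ k ≤ 1 / (n:ℝ)^2 := by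
    intro d hd
    obtain ⟨hd1, hd2⟩ := Finset.mem_Icc.mp hd
    have hdD : D ≤ d := (Nat.le_ceil D).trans (by exact_mod_cast hd1)
    have hdn : (d:ℝ) ≤ n := by exact_mod_cast hd2
    have hx1 : (d:ℝ) / (Real.exp 1 * n) ≤ 1 := by
      rw [div_le_one (by positivity)]
      nlinarith
    have h1 : (1 - (d:ℝ) / (Real.exp 1 * n)) ^ k ≤
        Real.exp (-((d:ℝ) / (Real.exp 1 * n))) ^ k := by
      apply pow_le_pow_left₀ (by linarith)
      have := Real.add_one_le_exp (-((d:ℝ) / (Real.exp 1 * n)))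
      linarith
    have h2 : Real.exp (-((d:ℝ) / (Real.exp 1 * n))) ^ k
        = Real.exp (k * -((d:ℝ) / (Real.exp 1 * n))) := by
      rw [Real.exp_nat_mul]
    have h3 : Real.exp (k * -((d:ℝ) / (Real.exp 1 * n))) ≤
        Real.exp (-(2 * Real.log n)) := by
      apply Real.exp_le_exp.mpr
      have hge : 2 * Real.log n ≤ (k:ℝ) * ((d:ℝ) / (Real.exp 1 * n)) := by
        rw [hDdef, div_le_iff₀ hkpos] at hdD
        rw [mul_div_assoc', le_div_iff₀ (by positivity : (0:ℝ) < Real.exp 1 * n)]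
        nlinarith
      linarith
    have h4 : Real.exp (-(2 * Real.log n)) = 1 / (n:ℝ)^2 := by
      rw [Real.exp_neg, show (2:ℝ) = ((2:ℕ):ℝ) by norm_num, Real.exp_nat_mul,
        Real.exp_log hnpos, one_div]
    calc (1 - (d:ℝ) / (Real.exp 1 * n)) ^ k ≤ _ := h1
      _ = _ := h2
      _ ≤ _ := h3
      _ = 1 / (n:ℝ)^2 := h4
  have hceil : 1 ≤ ⌈D⌉₊ := Nat.ceil_pos.mpr hDpos
  have hcard : ((Finset.Icc ⌈D⌉₊ n).card : ℝ) ≤ n := by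
    rw [Nat.card_Icc]
    exact_mod_cast Nat.sub_le_of_le_add (by omega)
  calc ∑ d ∈ Finset.Icc ⌈D⌉₊ n, (1 - (d:ℝ) / (Real.exp 1 * n)) ^ k
      ≤ (Finset.Icc ⌈D⌉₊ n).card • (1 / (n:ℝ)^2) :=
        Finset.sum_le_card_nsmul _ _ _ hterm
    _ = ((Finset.Icc ⌈D⌉₊ n).card : ℝ) * (1 / (n:ℝ)^2) := nsmul_eq_mul _ _
    _ ≤ (n:ℝ) * (1 / (n:ℝ)^2) := by
        apply mul_le_mul_of_nonneg_right hcard (by positivity)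
    _ = 1 / n := by field_simp
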